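/- A binary word is a primitive lower Christoffel word if and only if it has length 1 or it is of the form 0C1 where C is a central word. -/

import Mathlib

/-- A word is primitive if it is not a proper power: `w = v^n` implies `n = 1`. -/
def Primitive {α : Type*} (w : List α) : Prop :=
  ∀ (v : List α) (n : ℕ), w = (List.replicate n v).flatten → n = 1

/-- A Lyndon word: nonempty and lexicographically strictly smaller than all
its proper nonempty suffixes. -/
def Lyndon {α : Type*} [LinearOrder α] (w : List α) : Prop :=
  w ≠ [] ∧ ∀ u v : List α, w = u ++ v → u ≠ [] → v ≠ [] → List.Lex (· < ·) w v

/-- A Lyndon word for the reversed order `1 < 0` on `Bool`. -/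
def LyndonRev (w : List Bool) : Prop :=
  w ≠ [] ∧ ∀ u v : List Bool, w = u ++ v → u ≠ [] → v ≠ [] → List.Lex (· > ·) w v

/-- A binary word is balanced if the numbers of `1`s in any two factors of the
same length differ by at most 1. (`false` plays the role of `0`, `true` of `1`.) -/
def Balanced01 (w : List Bool) : Prop :=
  ∀ u v : List Bool, u <:+: w → v <:+: w → u.length = v.length →
    (u.count true : ℤ) - (v.count true : ℤ) ≤ 1

/-- `w` has period `p`: `w[i] = w[i+p]` for all valid indices. -/
def HasPeriod (w : List Bool) (p : ℕ) : Prop :=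
  ∀ i : ℕ, i + p < w.length → w[i]? = w[i + p]?

/-- A central word: it has coprime periods `p`, `q` and length `p + q - 2`. -/
def Central (w : List Bool) : Prop :=
  ∃ p q : ℕ, Nat.Coprime p q ∧ HasPeriod w p ∧ HasPeriod w q ∧ w.length + 2 = p + q

/-- The lower Christoffel word of slope `b/a`: letter `i` is `1` (`true`) iff the
line `y = bx/(a+b)`... encoded via floor differences `⌊(i+1)b/(a+b)⌋ - ⌊ib/(a+b)⌋`. -/
def chr (a b : ℕ) : List Bool :=
  List.ofFn (fun i : Fin (a + b) =>
    decide ((i : ℕ) * b / (a + b) < ((i : ℕ) + 1) * b / (a + b)))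

/-- An (upward) digitally convex word: all factors of its Lyndon factorization
(for the order `0 < 1`) are balanced Lyndon words, i.e. primitive lower
Christoffel words. -/
def DC (w : List Bool) : Prop :=
  ∃ L : List (List Bool), L.flatten = w ∧ (∀ x ∈ L, Lyndon x ∧ Balanced01 x) ∧
    L.Chain' (fun a b => ¬ List.Lex (· < ·) a b)

/-- A downward digitally convex word: all factors of its Lyndon factorization
for the order `1 < 0` are balanced. -/
def DCdown (w : List Bool) : Prop :=
  ∃ L : List (List Bool), L.flatten = w ∧ (∀ x ∈ L, LyndonRev x ∧ Balanced01 x) ∧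
    L.Chain' (fun a b => ¬ List.Lex (· > ·) a b)

/-- `(u, v)` is the standard factorization of `u ++ v`: both parts nonempty and
`v` is the lexicographically least proper nonempty suffix of `u ++ v`. -/
def StdFact (u v : List Bool) : Prop :=
  u ≠ [] ∧ v ≠ [] ∧
    ∀ s : List Bool, s ≠ [] → s ≠ u ++ v → s <:+ u ++ v →
      s = v ∨ List.Lex (· < ·) v s

/-- A word is unbordered if it has no nonempty proper border. -/
def Unbordered (w : List Bool) : Prop :=
  ∀ u : List Bool, u <+: w → u <:+ w → u ≠ w → u = []

section Aux

theorem chr_length (a b : ℕ) : (chr a b).length = a + b := by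
  simp [chr]

theorem chr_getElem (a b : ℕ) (ha : 1 ≤ a) (i : ℕ) (hi : i < a + b) :
    (chr a b)[i]'(by simpa using (chr_length a b) ▸ hi) = decide (a ≤ i * b % (a + b)) := by
  set n := a + b with hn
  have hn0 : 0 < n := by omega
  simp only [chr, List.getElem_ofFn]
  congr 1
  have hx : i * b = n * (i * b / n) + i * b % n := (Nat.div_add_mod _ _).symm
  have h1 : (i + 1) * b = n * (i * b / n) + (i * b % n + b) := by
    rw [add_mul, one_mul]; nth_rewrite 1 [hx]; ring
  rw [h1, Nat.mul_add_div hn0, eq_iff_iff, ← hn]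
  have hmlt : i * b % n < n := Nat.mod_lt _ hn0
  constructor
  · intro h
    have : 0 < (i * b % n + b) / n := by omega
    have := (Nat.le_div_iff_mul_le hn0).mp this
    omega
  · intro h
    have : n ≤ i * b % n + b := by omega
    have : 1 ≤ (i * b % n + b) / n := (Nat.le_div_iff_mul_le hn0).mpr (by omega)
    omega

theorem chr_getElem? (a b : ℕ) (ha : 1 ≤ a) (i : ℕ) (hi : i < a + b) :
    (chr a b)[i]? = some (decide (a ≤ i * b % (a + b))) := by
  rw [List.getElem?_eq_getElem (by simpa using (chr_length a b) ▸ hi : i < (chr a b).length)]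
  rw [chr_getElem a b ha i hi]

theorem last_mod (a b n : ℕ) (hab : a + b = n) (hb : 1 ≤ b) :
    (n - 1) * b % n = a := by
  have key : (n - 1) * b = n * (b - 1) + a := by
    obtain ⟨b', rfl⟩ : ∃ b', b = b' + 1 := ⟨b - 1, by omega⟩
    subst hab
    have h1 : a + (b' + 1) - 1 = a + b' := by omega
    have h2 : b' + 1 - 1 = b' := by omega
    rw [h1, h2]; ring
  rw [key, Nat.mul_add_mod, Nat.mod_eq_of_lt (by omega)]

theorem cancel_mod (n b i j : ℕ) (hc : Nat.Coprime b n) (hi : i < n) (hj : j < n)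
    (h : i * b % n = j * b % n) : i = j := by
  have : i ≡ j [MOD n] :=
    Nat.ModEq.cancel_right_of_coprime (by simpa [Nat.coprime_comm] using hc) h
  exact this.eq_of_lt_of_lt hi hj

theorem cop_of_inv (p b n : ℕ) (hn : 2 ≤ n) (h : p * b % n = 1) : Nat.Coprime p n := by
  obtain ⟨k, hk⟩ : ∃ k, p * b = n * k + 1 :=
    ⟨p * b / n, by have := Nat.div_add_mod (p * b) n; omega⟩
  have h1 : Nat.gcd p n ∣ p * b := (Nat.gcd_dvd_left p n).mul_right _
  have h2 : Nat.gcd p n ∣ n * k := (Nat.gcd_dvd_right p n).mul_right _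
  have h3 : Nat.gcd p n ∣ 1 := by
    have := Nat.dvd_sub h1 h2
    rwa [hk, Nat.add_sub_cancel_left] at this
  exact Nat.dvd_one.mp h3

theorem qb_mod (p b n : ℕ) (hn : 2 ≤ n) (hp1 : 1 ≤ p) (hpn : p < n) (hb : 1 ≤ b)
    (hbn : b ≤ n) (h : p * b % n = 1) : (n - p) * b % n = n - 1 := by
  obtain ⟨k, hk⟩ : ∃ k, p * b = n * k + 1 :=
    ⟨p * b / n, by have := Nat.div_add_mod (p * b) n; omega⟩
  have hkb : k < b := by
    have h1 : p * b < n * b := by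
      exact Nat.mul_lt_mul_of_lt_of_le hpn (le_refl b) (by omega)
    have h2 : n * k < n * b := by omega
    exact lt_of_mul_lt_mul_left h2 (Nat.zero_le n)
  have e1 : (n - p) * b + p * b = n * b := by
    rw [← add_mul, Nat.sub_add_cancel hpn.le]
  have e2 : n * (b - k - 1) + n * k + n = n * b := by
    have h4 : (b - k - 1) + k + 1 = b := by omega
    calc n * (b - k - 1) + n * k + n = n * ((b - k - 1) + k + 1) := by ring
      _ = n * b := by rw [h4]
  have key : (n - p) * b = n * (b - k - 1) + (n - 1) := by omega
  rw [key, Nat.mul_add_mod, Nat.mod_eq_of_lt (by omega)]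

-- H7 : i*(n-b) % n = n - (i*b%n)  when 1 ≤ i*b%n

theorem compl_mod (i b n : ℕ) (hn : 2 ≤ n) (hbn : b ≤ n)
    (hr : 1 ≤ i * b % n) : i * (n - b) % n = n - i * b % n := by
  obtain ⟨k, hk⟩ : ∃ k, i * b = n * k + i * b % n :=
    ⟨i * b / n, by have := Nat.div_add_mod (i * b) n; omega⟩
  set r := i * b % n with hrdef
  have hrn : r < n := Nat.mod_lt _ (by omega)
  have hki : k < i := by
    have h1 : i * b ≤ i * n := Nat.mul_le_mul_left i hbn
    have h2 : n * k < n * i := by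
      have : n * k < i * b := by omega
      calc n * k < i * b := this
        _ ≤ i * n := h1
        _ = n * i := by ring
    exact lt_of_mul_lt_mul_left h2 (Nat.zero_le n)
  have e1 : i * (n - b) + i * b = i * n := by
    rw [← mul_add, Nat.sub_add_cancel hbn]
  have e2 : n * (i - k - 1) + n * k + n = i * n := by
    have h4 : (i - k - 1) + k + 1 = i := by omega
    calc n * (i - k - 1) + n * k + n = n * ((i - k - 1) + k + 1) := by ring
      _ = n * i := by rw [h4]
      _ = i * n := by ring
  have key : i * (n - b) = n * (i - k - 1) + (n - r) := by omega
  rw [key, Nat.mul_add_mod, Nat.mod_eq_of_lt (by omega)]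

theorem tele_count (f : ℕ → ℕ) (mono : ∀ i, f i ≤ f (i + 1))
    (step : ∀ i, f (i + 1) ≤ f i + 1) :
    ∀ n, (List.ofFn (fun i : Fin n => decide (f i < f (i + 1)))).count true = f n - f 0 := by
  intro n
  induction n with
  | zero => simp
  | succ m ih =>
    rw [List.ofFn_succ']
    simp only [List.concat_eq_append, List.count_append, Fin.coe_castSucc, Fin.val_last]
    rw [ih]
    have h0m : f 0 ≤ f m := by
      clear ih; induction m with
      | zero => exact le_refl _
      | succ k ihk => exact le_trans ihk (mono k)
    have h1 := mono m
    have h2 := step m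
    by_cases h : f m < f (m + 1)
    · simp [h]
      omega
    · simp [h]
      omega

theorem count_true_chr (a b : ℕ) (h : 1 ≤ a + b) : (chr a b).count true = b := by
  have hb : b ≤ a + b := by omega
  have := tele_count (fun i => i * b / (a + b))
    (fun i => Nat.div_le_div_right (Nat.mul_le_mul_right b (by omega)))
    (fun i => by
      have h1 : (i + 1) * b ≤ i * b + (a + b) := by
        have := Nat.add_mul i 1 b; omega
      calc (i + 1) * b / (a + b) ≤ (i * b + (a + b)) / (a + b) := Nat.div_le_div_right h1
        _ = i * b / (a + b) + 1 := by rw [Nat.add_div_right _ (by omega)]) (a + b)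
  have hc2 : b * (a + b) / (a + b) = b := by
    have h2 := Nat.mul_div_cancel_left b (show 0 < a + b by omega)
    rwa [Nat.mul_comm (a + b) b] at h2
  simpa [chr, Nat.mul_comm, hc2] using this

theorem count_bool (w : List Bool) : w.count true + w.count false = w.length := by
  induction w with
  | nil => simp
  | cons x t ih => cases x <;> simp [List.count_cons, *] <;> omega

theorem count_false_chr (a b : ℕ) (h : 1 ≤ a + b) : (chr a b).count false = a := by
  have h1 := count_bool (chr a b)
  have h2 := count_true_chr a b h
  have h3 : (chr a b).length = a + b := by simp [chr]
  omega

theorem len_flat_rep (v : List Bool) (k : ℕ) :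
    (List.replicate k v).flatten.length = k * v.length := by
  induction k with
  | zero => simp
  | succ m ih => simp [List.replicate_succ, ih]; ring

theorem count_flat_rep (v : List Bool) (k : ℕ) (x : Bool) :
    (List.replicate k v).flatten.count x = k * v.count x := by
  induction k with
  | zero => simp
  | succ m ih => simp [List.replicate_succ, ih]; ring

theorem chr_primitive (a b : ℕ) (hc : Nat.Coprime a b) (h1 : 1 ≤ a + b) :
    Primitive (chr a b) := by
  intro v k hw
  have hct : b = k * v.count true := by
    rw [← count_true_chr a b h1, hw, count_flat_rep]
  have hcf : a = k * v.count false := by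
    rw [← count_false_chr a b h1, hw, count_flat_rep]
  have hka : k ∣ a := ⟨_, hcf⟩
  have hkb : k ∣ b := ⟨_, hct⟩
  have : k ∣ 1 := hc ▸ Nat.dvd_gcd hka hkb
  exact Nat.dvd_one.mp this

theorem flat_rep_getElem? (v : List Bool) (hv : 0 < v.length) (k i : ℕ) :
    (List.replicate k v).flatten[i]? =
      if i < k * v.length then v[i % v.length]? else none := by
  induction k generalizing i with
  | zero => simp
  | succ m ih =>
    rw [List.replicate_succ, List.flatten_cons, List.getElem?_append, ih]
    have hmul : (m + 1) * v.length = v.length + m * v.length := by ring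
    by_cases h : i < v.length
    · rw [if_pos h, if_pos (by omega), Nat.mod_eq_of_lt h]
    · rw [if_neg h]
      have hmod : (i - v.length) % v.length = i % v.length := by
        conv_rhs => rw [Nat.mod_eq_sub_mod (show v.length ≤ i by omega)]
      rw [hmod]
      by_cases h2 : i - v.length < m * v.length
      · rw [if_pos h2, if_pos (by omega)]
      · rw [if_neg h2, if_neg (by omega)]

theorem chr_pow (a b d : ℕ) (ha : 1 ≤ a) (hb : 1 ≤ b) (hda : d ∣ a) (hdb : d ∣ b)
    (hd : 1 ≤ d) : chr a b = (List.replicate d (chr (a / d) (b / d))).flatten := by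
  obtain ⟨a', rfl⟩ := hda
  obtain ⟨b', rfl⟩ := hdb
  have ha' : 1 ≤ a' := by by_contra h; push_neg at h; interval_cases a' <;> omega
  have hb' : 1 ≤ b' := by by_contra h; push_neg at h; interval_cases b' <;> omega
  rw [Nat.mul_div_cancel_left a' (by omega), Nat.mul_div_cancel_left b' (by omega)]
  have hlen : (chr a' b').length = a' + b' := chr_length a' b'
  have hsum : d * (a' + b') = d * a' + d * b' := by ring
  apply List.ext_getElem?
  intro i
  rw [flat_rep_getElem? _ (by omega) d i, hlen]
  by_cases hi : i < d * a' + d * b'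
  · rw [chr_getElem? _ _ (by omega) i hi, if_pos (by omega)]
    have him : i % (a' + b') < a' + b' := Nat.mod_lt _ (by omega)
    rw [chr_getElem? a' b' ha' _ him]
    have e1 : i * (d * b') = d * (i * b') := by ring
    have e2 : d * a' + d * b' = d * (a' + b') := by ring
    rw [e1, e2, Nat.mul_mod_mul_left, ← Nat.mod_mul_mod]
    congr 1
    rw [decide_eq_decide]
    constructor
    · intro h
      exact Nat.le_of_mul_le_mul_left h (by omega)
    · intro h
      exact Nat.mul_le_mul_left d h
  · rw [if_neg (by omega), List.getElem?_eq_none (by rw [chr_length]; omega)]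

theorem rep_single (x : Bool) (k : ℕ) :
    (List.replicate k ([x] : List Bool)).flatten = List.replicate k x := by
  induction k with
  | zero => simp
  | succ m ih => simp [List.replicate_succ, ih]

theorem chr_zero_left (b : ℕ) (h : 1 ≤ b) : (chr 0 b) = List.replicate b true := by
  unfold chr
  have key : (fun i : Fin (0 + b) => decide ((i : ℕ) * b / (0 + b) < ((i : ℕ) + 1) * b / (0 + b)))
      = fun _ => true := by
    funext i
    simp only [Nat.zero_add]
    rw [Nat.mul_div_cancel _ (by omega), Nat.mul_div_cancel _ (by omega)]
    simp
  rw [key, List.ofFn_const, Nat.zero_add]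

theorem chr_zero_right (a : ℕ) : (chr a 0) = List.replicate a false := by
  unfold chr
  simp

theorem build (C : List Bool) (a b : ℕ) (ha : 1 ≤ a) (hb : 1 ≤ b)
    (hab : a + b = C.length + 2)
    (hmid : ∀ i, 1 ≤ i → i ≤ C.length →
      C[i - 1]? = some (decide (a ≤ i * b % (a + b)))) :
    false :: (C ++ [true]) = chr a b := by
  apply List.ext_getElem?
  intro i
  match i with
  | 0 =>
    rw [List.getElem?_cons_zero, chr_getElem? a b ha 0 (by omega)]
    simp; omega
  | j + 1 =>
    rw [List.getElem?_cons_succ, List.getElem?_append]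
    by_cases hj : j < C.length
    · rw [if_pos hj, chr_getElem? a b ha (j + 1) (by omega)]
      have := hmid (j + 1) (by omega) (by omega)
      simpa using this
    · rw [if_neg hj]
      by_cases hj2 : j = C.length
      · subst hj2
        simp only [Nat.sub_self]
        rw [show ([true] : List Bool)[0]? = some true from rfl]
        rw [chr_getElem? a b ha (C.length + 1) (by omega)]
        have hl : (a + b - 1) = C.length + 1 := by omega
        have := last_mod a b (a + b) rfl hb
        rw [hl] at this
        rw [this]
        simp
      · have h1 : ([true] : List Bool)[j - C.length]? = none :=
          List.getElem?_eq_none (by simp; omega)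
        rw [h1, List.getElem?_eq_none]
        rw [chr_length]; omega

theorem inv_exists (c n : ℕ) (hn : 2 ≤ n) (hc : Nat.Coprime c n) :
    ∃ p, 1 ≤ p ∧ p < n ∧ p * c % n = 1 := by
  obtain ⟨m, -, hm⟩ := Nat.exists_mul_mod_eq_one_of_coprime hc (by omega)
  refine ⟨m % n, ?_, Nat.mod_lt _ (by omega), ?_⟩
  · rcases Nat.eq_zero_or_pos (m % n) with h | h
    · exfalso
      have h2 : m % n * c % n = 1 := by rw [Nat.mod_mul_mod, mul_comm]; exact hm
      rw [h] at h2
      simp at h2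
    · omega
  · rw [Nat.mod_mul_mod, mul_comm]; exact hm

theorem periodA (n a b p i : ℕ) (hab : a + b = n) (ha : 1 ≤ a) (hb : 1 ≤ b)
    (hcb : Nat.Coprime b n) (hpb : p * b % n = 1)
    (hi1 : 1 ≤ i) (hi2 : i + p ≤ n - 2) :
    (a ≤ i * b % n) ↔ (a ≤ (i + p) * b % n) := by
  have hn : 2 ≤ n := by omega
  have hxlt : i * b % n < n := Nat.mod_lt _ (by omega)
  have hy : (i + p) * b % n = (i * b % n + 1) % n := by
    rw [add_mul, Nat.add_mod, hpb]
  by_cases hx1 : i * b % n = n - 1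
  · exfalso
    have hy0 : (i + p) * b % n = 0 := by
      rw [hy, hx1]
      have h3 : n - 1 + 1 = n := by omega
      rw [h3, Nat.mod_self]
    have h4 : n ∣ (i + p) * b := Nat.dvd_of_mod_eq_zero hy0
    have h5 : n ∣ (i + p) := (hcb.symm).dvd_of_dvd_mul_right h4
    have h6 : n ≤ i + p := Nat.le_of_dvd (by omega) h5
    omega
  · have hy1 : (i + p) * b % n = i * b % n + 1 := by
      rw [hy, Nat.mod_eq_of_lt (by omega)]
    by_cases hx2 : i * b % n = a - 1
    · exfalso
      have h1 : (i + p) * b % n = (n - 1) * b % n := by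
        rw [hy1, hx2, last_mod a b n hab hb]; omega
      have := cancel_mod n b (i + p) (n - 1) hcb (by omega) (by omega) h1
      omega
    · rw [hy1]; omega

theorem periodB (n a b p i : ℕ) (hab : a + b = n) (ha : 1 ≤ a) (hb : 1 ≤ b)
    (hcb : Nat.Coprime b n) (hp1 : 1 ≤ p) (hpn : p < n) (hpb : p * b % n = 1)
    (hi1 : 1 ≤ i) (hi2 : i + (n - p) ≤ n - 2) :
    (a ≤ i * b % n) ↔ (a ≤ (i + (n - p)) * b % n) := by
  have hn : 2 ≤ n := by omega
  have hxlt : i * b % n < n := Nat.mod_lt _ (by omega)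
  have hqb : (n - p) * b % n = n - 1 := qb_mod p b n hn hp1 hpn hb (by omega) hpb
  have hy : (i + (n - p)) * b % n = (i * b % n + (n - 1)) % n := by
    rw [add_mul, Nat.add_mod, hqb]
  by_cases hx0 : i * b % n = 0
  · exfalso
    have h4 : n ∣ i * b := Nat.dvd_of_mod_eq_zero hx0
    have h5 : n ∣ i := (hcb.symm).dvd_of_dvd_mul_right h4
    have h6 : n ≤ i := Nat.le_of_dvd (by omega) h5
    omega
  · have hy1 : (i + (n - p)) * b % n = i * b % n - 1 := by
      rw [hy]
      have h3 : i * b % n + (n - 1) = n + (i * b % n - 1) := by omega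
      rw [h3, Nat.add_mod_left, Nat.mod_eq_of_lt (by omega)]
    by_cases hx2 : i * b % n = a
    · exfalso
      have h1 : i * b % n = (n - 1) * b % n := by
        rw [hx2, last_mod a b n hab hb]
      have := cancel_mod n b i (n - 1) hcb (by omega) (by omega) h1
      omega
    · rw [hy1]; omega

theorem forward_dir (w : List Bool) (hP : Primitive w) (a b : ℕ)
    (hab : ¬(a = 0 ∧ b = 0)) (hw : w = chr a b) :
    w.length = 1 ∨ ∃ C : List Bool, Central C ∧ w = false :: (C ++ [true]) := by
  by_cases hb0 : b = 0
  · subst hb0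
    have ha : 1 ≤ a := by omega
    have ha1 : a = 1 := hP [false] a (by rw [hw, chr_zero_right, rep_single])
    left; rw [hw, chr_length]; omega
  by_cases ha0 : a = 0
  · subst ha0
    have hb : 1 ≤ b := by omega
    have hb1 : b = 1 := hP [true] b (by rw [hw, chr_zero_left b hb, rep_single])
    left; rw [hw, chr_length]; omega
  -- main case
  have ha : 1 ≤ a := by omega
  have hb : 1 ≤ b := by omega
  set d := Nat.gcd a b with hd
  have hd1 : 1 ≤ d := Nat.gcd_pos_of_pos_left b (by omega)
  have hdeq : d = 1 := hP (chr (a / d) (b / d)) d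
    (by rw [hw]; exact chr_pow a b d ha hb (Nat.gcd_dvd_left a b) (Nat.gcd_dvd_right a b) hd1)
  have hc : Nat.Coprime a b := hdeq
  set n := a + b with hn
  have hn2 : 2 ≤ n := by omega
  have hcb : Nat.Coprime b n := by
    rw [hn, Nat.coprime_add_self_right]
    exact hc.symm
  obtain ⟨p, hp1, hpn, hpb⟩ := inv_exists b n hn2 hcb
  set q := n - p with hq
  set C : List Bool := List.ofFn (fun j : Fin (n - 2) => decide (a ≤ ((j : ℕ) + 1) * b % n))
    with hC
  have hClen : C.length = n - 2 := by rw [hC]; simp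
  have hCget : ∀ j, j < n - 2 → C[j]? = some (decide (a ≤ (j + 1) * b % n)) := by
    intro j hj
    rw [hC, List.getElem?_ofFn]
    simp [List.ofFnNthVal, hj]
  have hcpn : Nat.Coprime p n := cop_of_inv p b n hn2 hpb
  have hcpq : Nat.Coprime p q := by
    have g1 : Nat.gcd p q ∣ p := Nat.gcd_dvd_left _ _
    have g2 : Nat.gcd p q ∣ q := Nat.gcd_dvd_right _ _
    have g3 : Nat.gcd p q ∣ n := by
      have : p + q = n := by omega
      exact this ▸ Nat.dvd_add g1 g2
    have : Nat.gcd p q ∣ Nat.gcd p n := Nat.dvd_gcd g1 g3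
    rw [hcpn] at this
    exact Nat.dvd_one.mp this
  have hper_p : HasPeriod C p := by
    intro j hj
    rw [hClen] at hj
    rw [hCget j (by omega), hCget (j + p) (by omega)]
    congr 1
    rw [decide_eq_decide]
    have h2 : (j + p) + 1 = (j + 1) + p := by omega
    rw [h2]
    exact periodA n a b p (j + 1) hn.symm ha hb hcb hpb (by omega) (by omega)
  have hper_q : HasPeriod C q := by
    intro j hj
    rw [hClen] at hj
    rw [hCget j (by omega), hCget (j + q) (by omega)]
    congr 1
    rw [decide_eq_decide]
    have h2 : (j + q) + 1 = (j + 1) + (n - p) := by omega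
    rw [h2]
    exact periodB n a b p (j + 1) hn.symm ha hb hcb hp1 hpn hpb (by omega) (by omega)
  right
  refine ⟨C, ⟨p, q, hcpq, hper_p, hper_q, by omega⟩, ?_⟩
  rw [hw]
  refine (build C a b ha hb (by omega) ?_).symm
  intro i hi1 hi2
  rw [hClen] at hi2
  have h3 : (i - 1) + 1 = i := by omega
  rw [hCget (i - 1) (by omega), h3]

theorem backward_central (C : List Bool) (hC : Central C) :
    ∃ a b : ℕ, 1 ≤ a ∧ 1 ≤ b ∧ Nat.Coprime a b ∧
      false :: (C ++ [true]) = chr a b := by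
  obtain ⟨p, q, hpq, hPp, hPq, hlen⟩ := hC
  set n := C.length + 2 with hn
  have hn2 : 2 ≤ n := by omega
  have hp1 : 1 ≤ p := by
    rcases Nat.eq_zero_or_pos p with h | h
    · exfalso; rw [h] at hpq; have := Nat.coprime_zero_left q |>.mp hpq; omega
    · exact h
  have hq1 : 1 ≤ q := by
    rcases Nat.eq_zero_or_pos q with h | h
    · exfalso; rw [h] at hpq; have := Nat.coprime_zero_right p |>.mp hpq; omega
    · exact h
  have hcpn : Nat.Coprime p n := by
    have : n = q + p := by omega
    rw [this, Nat.coprime_add_self_right]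
    exact hpq
  obtain ⟨b₀, hb₀1, hb₀n, hb₀p⟩ := inv_exists p n hn2 hcpn
  set a₀ := n - b₀ with ha₀
  have ha₀1 : 1 ≤ a₀ := by omega
  have ha₀n : a₀ < n := by omega
  have hab₀ : a₀ + b₀ = n := by omega
  have hcb₀n : Nat.Coprime b₀ n := cop_of_inv b₀ p n hn2 hb₀p
  have hpb₀ : p * b₀ % n = 1 := by rwa [mul_comm] at hb₀p
  -- key identities for r i := i * b₀ % n and ι s := s * p % n
  have key1 : ∀ s, s < n → (s * p % n) * b₀ % n = s := by
    intro s hs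
    rw [Nat.mod_mul_mod]
    have e : s * p * b₀ = s * (p * b₀) := by ring
    rw [e, Nat.mul_mod, hpb₀, Nat.mul_one, Nat.mod_mod_of_dvd _ (dvd_refl n),
      Nat.mod_eq_of_lt hs]
  have key2 : ∀ i, i < n → (i * b₀ % n) * p % n = i := by
    intro i hi
    rw [Nat.mod_mul_mod]
    have e : i * b₀ * p = i * (b₀ * p) := by ring
    rw [e, Nat.mul_mod, hb₀p, Nat.mul_one, Nat.mod_mod_of_dvd _ (dvd_refl n),
      Nat.mod_eq_of_lt hi]
  have hrlt : ∀ i : ℕ, i * b₀ % n < n := fun i => Nat.mod_lt _ (by omega)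
  have hiota_lt : ∀ s : ℕ, s * p % n < n := fun s => Nat.mod_lt _ (by omega)
  have hr_ne0 : ∀ i, 1 ≤ i → i ≤ n - 2 → i * b₀ % n ≠ 0 := by
    intro i h1 h2 h0
    have h4 : n ∣ i * b₀ := Nat.dvd_of_mod_eq_zero h0
    have h5 : n ∣ i := (hcb₀n.symm).dvd_of_dvd_mul_right h4
    have h6 : n ≤ i := Nat.le_of_dvd (by omega) h5
    omega
  have hlastr : (n - 1) * b₀ % n = a₀ := last_mod a₀ b₀ n hab₀ hb₀1
  have hr_nea : ∀ i, 1 ≤ i → i ≤ n - 2 → i * b₀ % n ≠ a₀ := by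
    intro i h1 h2 h0
    have h3 : i * b₀ % n = (n - 1) * b₀ % n := by rw [h0, hlastr]
    have := cancel_mod n b₀ i (n - 1) hcb₀n (by omega) (by omega) h3
    omega
  have hiota_bounds : ∀ s, 1 ≤ s → s ≤ n - 1 → s ≠ a₀ →
      1 ≤ s * p % n ∧ s * p % n ≤ n - 2 := by
    intro s h1 h2 h3
    constructor
    · rcases Nat.eq_zero_or_pos (s * p % n) with h | h
      · exfalso
        have := key1 s (by omega)
        rw [h] at this
        simp at this
        omega
      · exact h
    · by_contra hcon
      push_neg at hcon
      have hieq : s * p % n = n - 1 := by have := hiota_lt s; omega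
      have := key1 s (by omega)
      rw [hieq, hlastr] at this
      omega
  -- step lemma
  have step : ∀ s, 1 ≤ s → s + 1 ≤ n - 1 → s ≠ a₀ → s + 1 ≠ a₀ →
      C[s * p % n - 1]? = C[(s + 1) * p % n - 1]? := by
    intro s h1 h2 h3 h4
    set i := s * p % n with hi
    set i' := (s + 1) * p % n with hi'
    have hib := hiota_bounds s (by omega) (by omega) h3
    have hib' := hiota_bounds (s + 1) (by omega) (by omega) h4
    have hii' : i' = (i + p) % n := by
      rw [hi', hi]
      have e : (s + 1) * p = s * p + p := by ring
      rw [e, ← Nat.mod_add_mod]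
    by_cases hcase : i + p < n
    · have hieq : i' = i + p := by rw [hii', Nat.mod_eq_of_lt hcase]
      have := hPp (i - 1) (by omega)
      have e2 : (i - 1) + p = i' - 1 := by omega
      rwa [e2] at this
    · have hieq : i' = i + p - n := by
        rw [hii', Nat.mod_eq_sub_mod (by omega), Nat.mod_eq_of_lt (by have := hiota_lt s; omega)]
      have hi'q : (i' - 1) + q = i - 1 := by omega
      have := hPq (i' - 1) (by omega)
      rw [hi'q] at this
      exact this.symm
  -- chain lemma
  have chain : ∀ dlt s, 1 ≤ s → s + dlt ≤ n - 1 →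
      (∀ u, s ≤ u → u ≤ s + dlt → u ≠ a₀) →
      C[s * p % n - 1]? = C[(s + dlt) * p % n - 1]? := by
    intro dlt
    induction dlt with
    | zero => intro s _ _ _; rfl
    | succ d ih =>
      intro s h1 h2 h3
      have e1 : s + (d + 1) = (s + d) + 1 := by omega
      rw [e1]
      calc C[s * p % n - 1]? = C[(s + d) * p % n - 1]? :=
            ih s h1 (by omega) (fun u hu1 hu2 => h3 u hu1 (by omega))
        _ = C[((s + d) + 1) * p % n - 1]? :=
            step (s + d) (by omega) (by omega) (h3 (s + d) (by omega) (by omega))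
              (by have := h3 (s + d + 1) (by omega) (by omega); omega)
  -- same side lemma (one direction, r i ≤ r i')
  have same_side_le : ∀ i i', 1 ≤ i → i ≤ n - 2 → 1 ≤ i' → i' ≤ n - 2 →
      i * b₀ % n ≤ i' * b₀ % n →
      ((i * b₀ % n < a₀ ∧ i' * b₀ % n < a₀) ∨ (a₀ < i * b₀ % n ∧ a₀ < i' * b₀ % n)) →
      C[i - 1]? = C[i' - 1]? := by
    intro i i' h1 h2 h3 h4 hle hside
    set r := i * b₀ % n
    set r' := i' * b₀ % n
    have hr1 : 1 ≤ r := by have := hr_ne0 i h1 h2; omega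
    have hr'n : r' ≤ n - 1 := by have := hrlt i'; omega
    have hch := chain (r' - r) r hr1 (by omega) (by
      intro u hu1 hu2
      rcases hside with ⟨hs1, hs2⟩ | ⟨hs1, hs2⟩
      · omega
      · omega)
    have e1 : r + (r' - r) = r' := by omega
    rw [e1, key2 i (by omega), key2 i' (by omega)] at hch
    exact hch
  have same_side : ∀ i i', 1 ≤ i → i ≤ n - 2 → 1 ≤ i' → i' ≤ n - 2 →
      ((i * b₀ % n < a₀ ∧ i' * b₀ % n < a₀) ∨ (a₀ < i * b₀ % n ∧ a₀ < i' * b₀ % n)) →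
      C[i - 1]? = C[i' - 1]? := by
    intro i i' h1 h2 h3 h4 hside
    rcases le_total (i * b₀ % n) (i' * b₀ % n) with h | h
    · exact same_side_le i i' h1 h2 h3 h4 h hside
    · exact (same_side_le i' i h3 h4 h1 h2 h (by tauto)).symm
  -- value dichotomy
  have hgetC : ∀ i (h1 : 1 ≤ i) (h2 : i ≤ n - 2), C[i - 1]? = some (C[i - 1]'(by omega)) := by
    intro i h1 h2
    exact List.getElem?_eq_getElem _
  by_cases hLow : ∀ i, 1 ≤ i → i ≤ n - 2 → i * b₀ % n < a₀ → C[i - 1]? = some false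
  · by_cases hHigh : ∀ i, 1 ≤ i → i ≤ n - 2 → a₀ < i * b₀ % n → C[i - 1]? = some true
    · -- pattern: chr a₀ b₀
      refine ⟨a₀, b₀, ha₀1, hb₀1, ?_, ?_⟩
      · have g3 : Nat.gcd a₀ b₀ ∣ n := by
          have : a₀ + b₀ = n := hab₀
          exact this ▸ Nat.dvd_add (Nat.gcd_dvd_left _ _) (Nat.gcd_dvd_right _ _)
        have : Nat.gcd a₀ b₀ ∣ Nat.gcd b₀ n := Nat.dvd_gcd (Nat.gcd_dvd_right _ _) g3
        rw [hcb₀n] at this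
        exact Nat.dvd_one.mp this
      · refine build C a₀ b₀ ha₀1 hb₀1 (by omega) ?_
        intro i h1 h2
        have h2' : i ≤ n - 2 := by omega
        rw [hab₀]
        rcases Nat.lt_or_ge (i * b₀ % n) a₀ with h | h
        · rw [hLow i h1 (by omega) h]
          simp only [Option.some.injEq]
          rw [eq_comm, decide_eq_false_iff_not]
          omega
        · have hne := hr_nea i h1 (by omega)
          rw [hHigh i h1 (by omega) (by omega)]
          simp only [Option.some.injEq]
          rw [eq_comm, decide_eq_true_iff]
          omega
    · -- all false: chr (n-1) 1
      push_neg at hHigh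
      obtain ⟨i₀, hi₀1, hi₀2, hi₀r, hi₀v⟩ := hHigh
      have hi₀f : C[i₀ - 1]? = some false := by
        rw [hgetC i₀ hi₀1 hi₀2] at hi₀v ⊢
        rcases Bool.eq_false_or_eq_true (C[i₀ - 1]'(by omega)) with h | h
        · exact absurd (by rw [h]) hi₀v
        · rw [h]
      refine ⟨n - 1, 1, by omega, le_refl 1, Nat.coprime_one_right _, ?_⟩
      have hsum : (n - 1) + 1 = n := by omega
      refine build C (n - 1) 1 (by omega) (le_refl 1) (by omega) ?_
      intro i h1 h2
      have h2' : i ≤ n - 2 := by omega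
      rw [hsum]
      have hmod : i * 1 % n = i := by rw [Nat.mul_one, Nat.mod_eq_of_lt (by omega)]
      rw [hmod]
      have hval : C[i - 1]? = some false := by
        rcases Nat.lt_or_ge (i * b₀ % n) a₀ with h | h
        · exact hLow i h1 (by omega) h
        · have hne := hr_nea i h1 (by omega)
          rw [same_side i i₀ h1 (by omega) hi₀1 hi₀2 (Or.inr ⟨by omega, hi₀r⟩)]
          exact hi₀f
      rw [hval]
      simp only [Option.some.injEq]
      rw [eq_comm, decide_eq_false_iff_not]
      omega
  · by_cases hHigh : ∀ i, 1 ≤ i → i ≤ n - 2 → a₀ < i * b₀ % n → C[i - 1]? = some true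
    · -- all true: chr 1 (n-1)
      push_neg at hLow
      obtain ⟨i₀, hi₀1, hi₀2, hi₀r, hi₀v⟩ := hLow
      have hi₀t : C[i₀ - 1]? = some true := by
        rw [hgetC i₀ hi₀1 hi₀2] at hi₀v ⊢
        rcases Bool.eq_false_or_eq_true (C[i₀ - 1]'(by omega)) with h | h
        · rw [h]
        · exact absurd (by rw [h]) hi₀v
      refine ⟨1, n - 1, le_refl 1, by omega, Nat.coprime_one_left _, ?_⟩
      have hsum : 1 + (n - 1) = n := by omega
      refine build C 1 (n - 1) (le_refl 1) (by omega) (by omega) ?_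
      intro i h1 h2
      have h2' : i ≤ n - 2 := by omega
      rw [hsum]
      have hmod1 : i * 1 % n = i := by rw [Nat.mul_one, Nat.mod_eq_of_lt (by omega)]
      have hmod : i * (n - 1) % n = n - i := by
        have := compl_mod i 1 n hn2 (by omega) (by rw [hmod1]; omega)
        rw [hmod1] at this
        exact this
      rw [hmod]
      have hval : C[i - 1]? = some true := by
        rcases Nat.lt_or_ge (i * b₀ % n) a₀ with h | h
        · rw [same_side i i₀ h1 (by omega) hi₀1 hi₀2 (Or.inl ⟨h, hi₀r⟩)]
          exact hi₀t
        · have hne := hr_nea i h1 (by omega)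
          exact hHigh i h1 (by omega) (by omega)
      rw [hval]
      simp only [Option.some.injEq]
      rw [eq_comm, decide_eq_true_iff]
      omega
    · -- pattern: chr b₀ a₀
      push_neg at hLow
      push_neg at hHigh
      obtain ⟨iL, hiL1, hiL2, hiLr, hiLv⟩ := hLow
      obtain ⟨iH, hiH1, hiH2, hiHr, hiHv⟩ := hHigh
      have hiLt : C[iL - 1]? = some true := by
        rw [hgetC iL hiL1 hiL2] at hiLv ⊢
        rcases Bool.eq_false_or_eq_true (C[iL - 1]'(by omega)) with h | h
        · rw [h]
        · exact absurd (by rw [h]) hiLv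
      have hiHf : C[iH - 1]? = some false := by
        rw [hgetC iH hiH1 hiH2] at hiHv ⊢
        rcases Bool.eq_false_or_eq_true (C[iH - 1]'(by omega)) with h | h
        · exact absurd (by rw [h]) hiHv
        · rw [h]
      refine ⟨b₀, a₀, hb₀1, ha₀1, ?_, ?_⟩
      · have g3 : Nat.gcd b₀ a₀ ∣ n := by
          have e : b₀ + a₀ = n := by omega
          exact e ▸ Nat.dvd_add (Nat.gcd_dvd_left _ _) (Nat.gcd_dvd_right _ _)
        have : Nat.gcd b₀ a₀ ∣ Nat.gcd b₀ n := Nat.dvd_gcd (Nat.gcd_dvd_left _ _) g3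
        rw [hcb₀n] at this
        exact Nat.dvd_one.mp this
      · have hsum : b₀ + a₀ = n := by omega
        refine build C b₀ a₀ hb₀1 ha₀1 (by omega) ?_
        intro i h1 h2
        have h2' : i ≤ n - 2 := by omega
        rw [hsum]
        have hr1 : 1 ≤ i * b₀ % n := by have := hr_ne0 i h1 (by omega); omega
        have hmod : i * a₀ % n = n - i * b₀ % n := by
          rw [ha₀]
          exact compl_mod i b₀ n hn2 (by omega) hr1
        rw [hmod]
        have hne := hr_nea i h1 (by omega)
        rcases Nat.lt_or_ge (i * b₀ % n) a₀ with h | h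
        · rw [same_side i iL h1 (by omega) hiL1 hiL2 (Or.inl ⟨h, hiLr⟩), hiLt]
          simp only [Option.some.injEq]
          rw [eq_comm, decide_eq_true_iff]
          omega
        · rw [same_side i iH h1 (by omega) hiH1 hiH2 (Or.inr ⟨by omega, hiHr⟩), hiHf]
          simp only [Option.some.injEq]
          rw [eq_comm, decide_eq_false_iff_not]
          omega

end Aux

/-- A word is a primitive lower Christoffel word iff it has length 1 or is of the
form `0C1` for a central word `C`. -/
theorem stmt6 (w : List Bool) :
    (Primitive w ∧ ∃ a b : ℕ, ¬(a = 0 ∧ b = 0) ∧ w = chr a b) ↔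
      (w.length = 1 ∨ ∃ C : List Bool, Central C ∧ w = false :: (C ++ [true])) := by
  constructor
  · rintro ⟨hP, a, b, hab, hw⟩
    exact forward_dir w hP a b hab hw
  · rintro (hlen | ⟨C, hC, hw⟩)
    · obtain ⟨x, rfl⟩ := List.length_eq_one_iff.mp hlen
      constructor
      · intro v k h
        have hl := congrArg List.length h
        rw [len_flat_rep] at hl
        simp at hl
        exact Nat.dvd_one.mp ⟨v.length, hl⟩
      · cases x
        · exact ⟨1, 0, by simp, by decide⟩
        · exact ⟨0, 1, by simp, by decide⟩
    · obtain ⟨a, b, ha, hb, hc, heq⟩ := backward_central C hC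
      subst hw
      refine ⟨?_, a, b, by omega, heq⟩
      rw [heq]
      exact chr_primitive a b hc (by omega)
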